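/- Consider the weight ω on ℤ² defined by ω(s,t) = (1+|s|+|t|)^α (1+|s+t|)^β with α, β ≥ 0. If α + 2β < 1, then for every (s,t) ∈ ℤ², lim_{n→∞} ω(ns,nt)·(1+n|s+t|)^β / n = 0. -/

import Mathlib

/-- for ω(s,t)=(1+|s|+|t|)^α(1+|s+t|)^β on ℤ² with α+2β<1,
lim_{n→∞} ω(ns,nt)(1+n|s+t|)^β / n = 0. -/
theorem stmt11 (α β : ℝ) (hα : 0 ≤ α) (hβ : 0 ≤ β) (h : α + 2 * β < 1) (s t : ℤ) :
    Filter.Tendsto (fun n : ℕ =>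
      ((1 + |(n : ℤ) * s| + |(n : ℤ) * t| : ℤ) : ℝ) ^ α *
      ((1 + |(n : ℤ) * s + (n : ℤ) * t| : ℤ) : ℝ) ^ β *
      (1 + (n : ℝ) * |((s + t : ℤ) : ℝ)|) ^ β / (n : ℝ))
      Filter.atTop (nhds 0) := by
  set A : ℝ := |(s : ℝ)| + |(t : ℝ)| with hAdef
  set B : ℝ := |((s + t : ℤ) : ℝ)| with hBdef
  have hA : 0 ≤ A := by positivity
  have hB : 0 ≤ B := abs_nonneg _
  set C : ℝ := (1 + A) ^ α * (1 + B) ^ β * (1 + B) ^ β with hCdef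
  have hC : 0 ≤ C := by positivity
  have hexp : α + β + β - 1 < 0 := by linarith
  have hlim : Filter.Tendsto (fun n : ℕ => C * (n : ℝ) ^ (α + β + β - 1))
      Filter.atTop (nhds 0) := by
    have := (tendsto_rpow_neg_atTop (y := -(α + β + β - 1)) (by linarith)).comp
      (tendsto_natCast_atTop_atTop (R := ℝ))
    simp only [neg_neg] at this
    simpa using this.const_mul C
  refine squeeze_zero' ?_ ?_ hlim
  · filter_upwards with n
    have h1 : (0:ℝ) ≤ ((1 + |(n : ℤ) * s| + |(n : ℤ) * t| : ℤ) : ℝ) := by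
      exact_mod_cast (by positivity : (0:ℤ) ≤ 1 + |(n : ℤ) * s| + |(n : ℤ) * t|)
    have h2 : (0:ℝ) ≤ ((1 + |(n : ℤ) * s + (n : ℤ) * t| : ℤ) : ℝ) := by
      exact_mod_cast (by positivity : (0:ℤ) ≤ 1 + |(n : ℤ) * s + (n : ℤ) * t|)
    have h3 : (0:ℝ) ≤ 1 + (n : ℝ) * B := by positivity
    positivity
  · filter_upwards [Filter.eventually_ge_atTop 1] with n hn
    have hn0 : (0:ℝ) < (n : ℝ) := by exact_mod_cast hn
    have hn1 : (1:ℝ) ≤ (n : ℝ) := by exact_mod_cast hn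
    have hX : ((1 + |(n : ℤ) * s| + |(n : ℤ) * t| : ℤ) : ℝ) = 1 + (n : ℝ) * |(s : ℝ)| + (n : ℝ) * |(t : ℝ)| := by
      push_cast
      rw [abs_mul, abs_mul, Nat.abs_cast]
    have hY : ((1 + |(n : ℤ) * s + (n : ℤ) * t| : ℤ) : ℝ) = 1 + (n : ℝ) * B := by
      push_cast [hBdef]
      rw [show ((n:ℝ) * s + (n:ℝ) * t) = (n:ℝ) * ((s:ℝ) + t) by ring, abs_mul, Nat.abs_cast]
    have hXle : ((1 + |(n : ℤ) * s| + |(n : ℤ) * t| : ℤ) : ℝ) ≤ (n : ℝ) * (1 + A) := by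
      rw [hX, hAdef]
      nlinarith [abs_nonneg (s:ℝ), abs_nonneg (t:ℝ)]
    have hYle : ((1 + |(n : ℤ) * s + (n : ℤ) * t| : ℤ) : ℝ) ≤ (n : ℝ) * (1 + B) := by
      rw [hY]; nlinarith
    have hZle : 1 + (n : ℝ) * B ≤ (n : ℝ) * (1 + B) := by nlinarith
    have hXp : ((1 + |(n : ℤ) * s| + |(n : ℤ) * t| : ℤ) : ℝ) ^ α ≤ ((n:ℝ) * (1 + A)) ^ α :=
      Real.rpow_le_rpow (by rw [hX]; positivity) hXle hα
    have hYp : ((1 + |(n : ℤ) * s + (n : ℤ) * t| : ℤ) : ℝ) ^ β ≤ ((n:ℝ) * (1 + B)) ^ β :=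
      Real.rpow_le_rpow (by rw [hY]; positivity) hYle hβ
    have hZp : (1 + (n : ℝ) * B) ^ β ≤ ((n:ℝ) * (1 + B)) ^ β :=
      Real.rpow_le_rpow (by positivity) hZle hβ
    have hmul : ((1 + |(n : ℤ) * s| + |(n : ℤ) * t| : ℤ) : ℝ) ^ α *
        ((1 + |(n : ℤ) * s + (n : ℤ) * t| : ℤ) : ℝ) ^ β * (1 + (n : ℝ) * B) ^ β ≤
        ((n:ℝ) * (1 + A)) ^ α * ((n:ℝ) * (1 + B)) ^ β * ((n:ℝ) * (1 + B)) ^ β := by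
      have h2 : (0:ℝ) ≤ ((1 + |(n : ℤ) * s + (n : ℤ) * t| : ℤ) : ℝ) ^ β := by
        rw [hY]; positivity
      have h1 : (0:ℝ) ≤ ((1 + |(n : ℤ) * s| + (|(n : ℤ) * t|) : ℤ) : ℝ) ^ α := by
        rw [hX]; positivity
      gcongr
    calc _ ≤ ((n:ℝ) * (1 + A)) ^ α * ((n:ℝ) * (1 + B)) ^ β * ((n:ℝ) * (1 + B)) ^ β / (n:ℝ) := by
            gcongr
      _ = C * (n : ℝ) ^ (α + β + β - 1) := by
            rw [Real.mul_rpow hn0.le (by positivity), Real.mul_rpow hn0.le (by positivity),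
              Real.rpow_sub hn0, Real.rpow_add hn0,
              Real.rpow_add hn0, Real.rpow_one, hCdef]
            field_simp
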